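/- In the flower ℓ-Kikuchi graph G of a k-uniform hypergraph H (k odd): if G contains a closed walk whose edges arise from good flower gadgets {C^{(j)}, P₁^{(j)},...,P_k^{(j)}} (j ranging over the steps of the walk), then the symmetric difference over all j of (P₁^{(j)} ⊕ ... ⊕ P_k^{(j)} ⊕ C^{(j)}) is empty. Consequently, the multiset of all hyperedges C^{(j)}, P_i^{(j)} appearing an odd number of times forms an even cover of H of size at most (k+1) times the walk length. -/

import Mathlib

/-- The iterated symmetric difference `P₁ ⊕ ⋯ ⊕ P_k ⊕ C`. -/
def totalSymmDiff {n k : ℕ} (C : Finset (Fin n)) (P : Fin k → Finset (Fin n)) :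
    Finset (Fin n) :=
  (List.ofFn P).foldr (fun A B => symmDiff A B) C

/-- The multiset of all hyperedges (centers and petals) of the gadgets along a walk. -/
def walkEdges {n k r : ℕ} (C : Fin r → Finset (Fin n))
    (P : Fin r → Fin k → Finset (Fin n)) : Multiset (Finset (Fin n)) :=
  Multiset.bind Finset.univ.val (fun j : Fin r => (C j) ::ₘ (List.ofFn (P j) : Multiset _))

/-- Indicator (in `ZMod 2`) of membership in an iterated symmetric difference. -/
lemma ind_foldr {n : ℕ} (x : Fin n) (C : Finset (Fin n)) (l : List (Finset (Fin n))) :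
    (if x ∈ l.foldr (fun A B => symmDiff A B) C then (1 : ZMod 2) else 0)
      = (l.map (fun A => if x ∈ A then (1 : ZMod 2) else 0)).sum
        + (if x ∈ C then 1 else 0) := by
  induction l with
  | nil => simp; congr
  | cons A l ih =>
    rw [List.foldr_cons, List.map_cons, List.sum_cons, add_assoc, ← ih]
    by_cases hA : x ∈ A <;>
      by_cases hB : x ∈ l.foldr (fun A B => symmDiff A B) C <;>
        (simp [Finset.mem_symmDiff, hA, hB]; try decide)

lemma natCast_zmod_two (m : ℕ) : (m : ZMod 2) = if Odd m then 1 else 0 := by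
  rw [← ZMod.natCast_mod m 2]
  rcases Nat.even_or_odd m with h | h
  · simp [Nat.even_iff.1 h, Nat.not_odd_iff_even.2 h]
  · simp [Nat.odd_iff.1 h, h]

theorem stmt14 (n k ℓ r : ℕ) (hk : Odd k) [NeZero r]
    (H : Finset (Finset (Fin n))) (hunif : ∀ E ∈ H, E.card = k)
    (S : Fin r → Finset (Fin n)) (hScard : ∀ j, (S j).card = ℓ)
    (C : Fin r → Finset (Fin n)) (v : Fin r → Fin k → Fin n)
    (P : Fin r → Fin k → Finset (Fin n))
    (hgadget : ∀ j : Fin r,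
      C j ∈ H ∧ Function.Injective (v j) ∧
      C j = Finset.image (v j) Finset.univ ∧
      (∀ i, P j i ∈ H) ∧ (∀ i i', i ≠ i' → Disjoint (P j i) (P j i')) ∧
      (∀ i, P j i ∩ C j = {v j i}))
    (hpetal : ∀ j : Fin r, ∀ i,
      ((S j) ∩ (P j i \ {v j i})).card = (k - 1) / 2 ∧
      ((S (j + 1)) ∩ (P j i \ {v j i})).card = (k - 1) / 2)
    (hwalk : ∀ j : Fin r, symmDiff (S j) (S (j + 1)) = totalSymmDiff (C j) (P j)) :
    (∀ x : Fin n, Even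
      ((Finset.univ.filter (fun j : Fin r => x ∈ totalSymmDiff (C j) (P j))).card)) ∧
    (∀ x : Fin n, Even
      ((((walkEdges C P).toFinset.filter
          (fun E => Odd ((walkEdges C P).count E))).filter (fun E => x ∈ E)).card)) ∧
    ((walkEdges C P).toFinset.filter
        (fun E => Odd ((walkEdges C P).count E))).card ≤ (k + 1) * r := by
  -- indicator computations
  have hindS : ∀ (x : Fin n) (j : Fin r),
      (if x ∈ totalSymmDiff (C j) (P j) then (1 : ZMod 2) else 0)
        = (if x ∈ S j then 1 else 0) + (if x ∈ S (j + 1) then 1 else 0) := by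
    intro x j
    rw [← hwalk j]
    by_cases h1 : x ∈ S j <;> by_cases h2 : x ∈ S (j + 1) <;>
      (simp [Finset.mem_symmDiff, h1, h2]; try decide)
  have hcast : ∀ x : Fin n,
      (((Finset.univ.filter (fun j : Fin r => x ∈ totalSymmDiff (C j) (P j))).card : ZMod 2))
        = ∑ j : Fin r, (if x ∈ totalSymmDiff (C j) (P j) then (1 : ZMod 2) else 0) := by
    intro x
    rw [Finset.card_filter, Nat.cast_sum]
    simp
  have hzero : ∀ x : Fin n,
      (((Finset.univ.filter (fun j : Fin r => x ∈ totalSymmDiff (C j) (P j))).card : ZMod 2))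
        = 0 := by
    intro x
    rw [hcast x]
    calc ∑ j : Fin r, (if x ∈ totalSymmDiff (C j) (P j) then (1 : ZMod 2) else 0)
        = ∑ j : Fin r, ((if x ∈ S j then (1 : ZMod 2) else 0)
            + (if x ∈ S (j + 1) then 1 else 0)) := by
          exact Finset.sum_congr rfl fun j _ => hindS x j
      _ = (∑ j : Fin r, (if x ∈ S j then (1 : ZMod 2) else 0))
            + ∑ j : Fin r, (if x ∈ S (j + 1) then (1 : ZMod 2) else 0) :=
          Finset.sum_add_distrib
      _ = (∑ j : Fin r, (if x ∈ S j then (1 : ZMod 2) else 0))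
            + ∑ j : Fin r, (if x ∈ S j then (1 : ZMod 2) else 0) := by
          congr 1
          exact Fintype.sum_equiv (Equiv.addRight (1 : Fin r)) _ _ (fun j => rfl)
      _ = 0 := CharTwo.add_self_eq_zero _
  have part1 : ∀ x : Fin n, Even
      ((Finset.univ.filter (fun j : Fin r => x ∈ totalSymmDiff (C j) (P j))).card) := by
    intro x
    have := (ZMod.natCast_eq_zero_iff _ 2).1 (hzero x)
    exact even_iff_two_dvd.2 this
  refine ⟨part1, ?_, ?_⟩
  · -- part 2
    intro x
    set M := walkEdges C P with hM
    set g : Finset (Fin n) → ZMod 2 := fun E => if x ∈ E then 1 else 0 with hg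
    have h1 : ((((M.toFinset.filter (fun E => Odd (M.count E))).filter
          (fun E => x ∈ E)).card : ZMod 2))
        = ∑ E ∈ M.toFinset, (M.count E : ZMod 2) * g E := by
      rw [Finset.filter_filter, Finset.card_filter, Nat.cast_sum]
      refine Finset.sum_congr rfl fun E _ => ?_
      by_cases ho : Odd (M.count E) <;> by_cases hx : x ∈ E <;>
        simp [ho, hx, hg, natCast_zmod_two]
    have h2 : ∑ E ∈ M.toFinset, (M.count E : ZMod 2) * g E = (M.map g).sum := by
      rw [Finset.sum_multiset_map_count M g]
      exact Finset.sum_congr rfl fun E _ => (nsmul_eq_mul _ _).symm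
    have h4 : ∀ j : Fin r, (((C j) ::ₘ (List.ofFn (P j) : Multiset _)).map g).sum
        = (if x ∈ totalSymmDiff (C j) (P j) then (1 : ZMod 2) else 0) := by
      intro j
      rw [Multiset.map_cons, Multiset.sum_cons]
      rw [show (totalSymmDiff (C j) (P j))
          = (List.ofFn (P j)).foldr (fun A B => symmDiff A B) (C j) from rfl]
      rw [ind_foldr x (C j) (List.ofFn (P j))]
      rw [Multiset.map_coe, Multiset.sum_coe]
      exact add_comm _ _
    have h3 : (M.map g).sum
        = ∑ j : Fin r, (if x ∈ totalSymmDiff (C j) (P j) then (1 : ZMod 2) else 0) := by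
      rw [hM, walkEdges, Multiset.map_bind, Multiset.sum_bind]
      have : ∀ j : Fin r, ((((C j) ::ₘ (List.ofFn (P j) : Multiset _)).map g)).sum
          = (if x ∈ totalSymmDiff (C j) (P j) then (1 : ZMod 2) else 0) := h4
      calc (Finset.univ.val.map fun j =>
              ((((C j) ::ₘ (List.ofFn (P j) : Multiset _)).map g)).sum).sum
          = ∑ j : Fin r, ((((C j) ::ₘ (List.ofFn (P j) : Multiset _)).map g)).sum := rfl
        _ = _ := Finset.sum_congr rfl fun j _ => h4 j
    have : ((((M.toFinset.filter (fun E => Odd (M.count E))).filter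
          (fun E => x ∈ E)).card : ZMod 2)) = 0 := by
      rw [h1, h2, h3, ← hcast x, hzero x]
    exact even_iff_two_dvd.2 ((ZMod.natCast_eq_zero_iff _ 2).1 this)
  · -- part 3
    have hcard : Multiset.card (walkEdges C P) = (k + 1) * r := by
      rw [walkEdges, Multiset.card_bind]
      have h : ∀ j : Fin r, Multiset.card ((C j) ::ₘ (List.ofFn (P j) : Multiset _)) = k + 1 := by
        intro j
        simp [List.length_ofFn]
      calc (Multiset.map (Multiset.card ∘ fun j : Fin r =>
              (C j) ::ₘ (List.ofFn (P j) : Multiset _)) Finset.univ.val).sum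
          = ∑ j : Fin r, Multiset.card ((C j) ::ₘ (List.ofFn (P j) : Multiset _)) := rfl
        _ = ∑ _j : Fin r, (k + 1) := Finset.sum_congr rfl fun j _ => h j
        _ = (k + 1) * r := by simp [Finset.sum_const, mul_comm]
    calc ((walkEdges C P).toFinset.filter
          (fun E => Odd ((walkEdges C P).count E))).card
        ≤ (walkEdges C P).toFinset.card := Finset.card_filter_le _ _
      _ ≤ Multiset.card (walkEdges C P) := Multiset.toFinset_card_le _
      _ = (k + 1) * r := hcard
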